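/- arXiv:2605.19694 — 3 statements merged into one kernel-verified Lean document; each statement's English description precedes it below -/
import Mathlib

section
/- For every integer k ≥ 1, every metric space (X, dist), every ε > 0 and all points x_1, …, x_k ∈ X, the k-th cumulant of the exclusion satisfies the tree inequality: |φ_k(x_1, …, x_k)| ≤ Σ_{T tree on {1,…,k}} ∏_{{i,j} ∈ E_T} 1_{dist(x_i,x_j) ≤ ε}, where the sum on the right runs over all trees on the vertex set {1,…,k}. -/
open scoped Classical
set_option linter.unusedSectionVars false
set_option linter.unusedVariables false

/-- The indicator `1_{dist(x_i, x_j) ≤ ε}`, as a function of an unordered pair `{i, j}`. -/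
noncomputable def exclIndicator {k : ℕ} {X : Type*} [MetricSpace X]
    (x : Fin k → X) (ε : ℝ) : Sym2 (Fin k) → ℝ :=
  Sym2.lift ⟨fun i j => if dist (x i) (x j) ≤ ε then (1 : ℝ) else 0,
    fun i j => by simp [dist_comm]⟩

/-- The `k`-th cumulant of the exclusion:
`φ_k(x_1,…,x_k) = Σ_{G connected graph on {1,…,k}} ∏_{{i,j} ∈ E_G} (−1_{dist(x_i,x_j) ≤ ε})`. -/
noncomputable def exclCumulant {X : Type*} [MetricSpace X]
    (k : ℕ) (x : Fin k → X) (ε : ℝ) : ℝ :=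
  ∑ G : SimpleGraph (Fin k),
    if G.Connected then ∏ e ∈ G.edgeFinset, (-(exclIndicator x ε e)) else 0

namespace TreeIneqAux

open SimpleGraph Finset

variable {V : Type*} [Fintype V] [DecidableEq V]

noncomputable def ew : Sym2 V → ℕ := fun e => (Fintype.equivFin (Sym2 V) e : ℕ)

lemma ew_inj : Function.Injective (ew (V := V)) := fun a b h =>
  (Fintype.equivFin (Sym2 V)).injective (Fin.val_injective h)

def resW (A : SimpleGraph V) (n : ℕ) : SimpleGraph V where
  Adj a b := A.Adj a b ∧ ew s(a, b) < n
  symm := ⟨by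
    rintro a b ⟨h1, h2⟩
    refine ⟨h1.symm, ?_⟩
    rwa [Sym2.eq_swap]⟩
  loopless := ⟨fun a h => A.irrefl h.1⟩

def kt (A : SimpleGraph V) : SimpleGraph V where
  Adj a b := A.Adj a b ∧ ¬ (resW A (ew s(a, b))).Reachable a b
  symm := ⟨by
    rintro a b ⟨h1, h2⟩
    refine ⟨h1.symm, fun hr => h2 ?_⟩
    rw [Sym2.eq_swap] at hr
    exact hr.symm⟩
  loopless := ⟨fun a h => A.irrefl h.1⟩

lemma resW_adj {A : SimpleGraph V} {n a b} :
    (resW A n).Adj a b ↔ A.Adj a b ∧ ew s(a, b) < n := Iff.rfl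

lemma kt_adj {A : SimpleGraph V} {a b} :
    (kt A).Adj a b ↔ A.Adj a b ∧ ¬ (resW A (ew s(a, b))).Reachable a b := Iff.rfl

lemma kt_le (A : SimpleGraph V) : kt A ≤ A := fun _ _ h => h.1

lemma resW_le (A : SimpleGraph V) (n : ℕ) : resW A n ≤ A := fun _ _ h => h.1

lemma resW_mono {A B : SimpleGraph V} (h : A ≤ B) (n : ℕ) : resW A n ≤ resW B n :=
  fun _ _ hab => ⟨h hab.1, hab.2⟩

lemma resW_mono_nat (A : SimpleGraph V) {m n : ℕ} (h : m ≤ n) : resW A m ≤ resW A n :=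
  fun _ _ hab => ⟨hab.1, lt_of_lt_of_le hab.2 h⟩

lemma reach_of_walk {G G' : SimpleGraph V} {u v : V} (p : G.Walk u v)
    (h : ∀ a b, G.Adj a b → G'.Reachable a b) : G'.Reachable u v := by
  induction p with
  | nil => exact Reachable.refl _
  | cons ha _ ih => exact (h _ _ ha).trans ih

lemma adj_reach_kt (A : SimpleGraph V) : ∀ a b, A.Adj a b → (kt A).Reachable a b := by
  suffices H : ∀ m a b, A.Adj a b → ew s(a, b) < m → (kt A).Reachable a b by
    intro a b h; exact H (ew s(a, b) + 1) a b h (Nat.lt_succ_self _)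
  intro m
  induction m with
  | zero => intro a b _ h; omega
  | succ m ih =>
    intro a b hab hlt
    by_cases hr : (resW A (ew s(a, b))).Reachable a b
    · obtain ⟨p⟩ := hr
      refine reach_of_walk p ?_
      intro c d hcd
      have h2 := hcd.2
      exact ih c d hcd.1 (by omega)
    · exact Adj.reachable ⟨hab, hr⟩

lemma reach_kt {A : SimpleGraph V} {u v : V} (h : A.Reachable u v) : (kt A).Reachable u v := by
  obtain ⟨p⟩ := h
  exact reach_of_walk p (adj_reach_kt A)

lemma resW_resW (A : SimpleGraph V) (n m : ℕ) :
    resW (resW A n) m = resW A (min n m) := by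
  ext a b
  simp only [resW_adj, lt_min_iff]
  tauto
  
lemma resW_kt (A : SimpleGraph V) (n : ℕ) :
    resW (kt A) n = kt (resW A n) := by
  ext a b
  simp only [resW_adj, kt_adj, resW_resW]
  constructor
  · rintro ⟨⟨h1, h2⟩, h3⟩
    refine ⟨⟨h1, h3⟩, ?_⟩
    rwa [min_eq_right h3.le]
  · rintro ⟨⟨h1, h3⟩, h2⟩
    rw [min_eq_right h3.le] at h2
    exact ⟨⟨h1, h2⟩, h3⟩

lemma reach_resW_kt {A : SimpleGraph V} {n : ℕ} {u v : V}
    (h : (resW A n).Reachable u v) : (resW (kt A) n).Reachable u v := by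
  rw [resW_kt]
  exact reach_kt h

lemma adj_congr_sym2 {G : SimpleGraph V} {a b c d : V} (h : s(a, b) = s(c, d)) :
    G.Adj a b ↔ G.Adj c d := by
  rw [← SimpleGraph.mem_edgeSet, ← SimpleGraph.mem_edgeSet, h]

lemma reach_congr_sym2 {G : SimpleGraph V} {a b c d : V} (h : s(a, b) = s(c, d))
    (hr : G.Reachable c d) : G.Reachable a b := by
  rw [Sym2.eq_iff] at h
  rcases h with ⟨rfl, rfl⟩ | ⟨rfl, rfl⟩
  · exact hr
  · exact hr.symm

lemma surgery {G G' : SimpleGraph V} {u v c d : V} (p : G.Walk u v)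
    (hnd : p.edges.Nodup) (hmem : s(c, d) ∈ p.edges)
    (hG' : ∀ g ∈ p.edges, g ≠ s(c, d) → g ∈ G'.edgeSet)
    (huv : G'.Reachable u v) : G'.Reachable c d := by
  induction p with
  | nil => simp at hmem
  | @cons a x v' ha q ih =>
    rw [SimpleGraph.Walk.edges_cons] at hmem hnd hG'
    by_cases he : s(a, x) = s(c, d)
    · have hq : ∀ g ∈ q.edges, g ∈ G'.edgeSet := by
        intro g hg
        refine hG' g (List.mem_cons_of_mem _ hg) ?_
        rintro rfl
        rw [he] at hnd
        exact (List.nodup_cons.mp hnd).1 (he ▸ hg)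
      have hxv : G'.Reachable x v' := ⟨q.transfer G' hq⟩
      exact reach_congr_sym2 he.symm (huv.trans hxv.symm)
    · have hmem' : s(c, d) ∈ q.edges := by
        rcases List.mem_cons.mp hmem with h | h
        · exact absurd h.symm he
        · exact h
      have hax : G'.Adj a x := by
        have := hG' s(a, x) (List.mem_cons_self) he
        rwa [SimpleGraph.mem_edgeSet] at this
      exact ih (List.nodup_cons.mp hnd).2 hmem'
        (fun g hg hne => hG' g (List.mem_cons_of_mem _ hg) hne)
        (hax.reachable.symm.trans huv)

lemma kt_isAcyclic (A : SimpleGraph V) : (kt A).IsAcyclic := by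
  rw [isAcyclic_iff_forall_edge_isBridge]
  intro e he
  induction e using Sym2.ind with
  | _ a b =>
  rw [isBridge_iff]
  rw [SimpleGraph.mem_edgeSet] at he
  rintro ⟨p₀ : (kt A \ fromEdgeSet {s(a, b)}).Walk a b⟩
  set G₂ := kt A \ fromEdgeSet {s(a, b)} with hG₂
  have hab : a ≠ b := he.1.ne
  -- use a path instead
  have hp : (p₀.bypass).IsPath := SimpleGraph.Walk.bypass_isPath p₀
  set p := p₀.bypass with hpdef
  have hnd : p.edges.Nodup := hp.edges_nodup
  have hedge : ∀ g ∈ p.edges, g ∈ (kt A).edgeSet ∧ g ≠ s(a, b) := by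
    intro g hg
    have := p.edges_subset_edgeSet hg
    rw [hG₂, edgeSet_sdiff, edgeSet_fromEdgeSet] at this
    refine ⟨this.1, fun hgg => this.2 ⟨hgg, ?_⟩⟩
    simp [hgg, Sym2.mk_isDiag_iff, hab]
  have hne : p.edges ≠ [] := by
    cases p with
    | nil => exact absurd rfl hab
    | cons h q => simp
  have hnonempty : p.edges.toFinset.Nonempty := by
    rcases List.exists_mem_of_ne_nil p.edges hne with ⟨g, hg⟩
    exact ⟨g, List.mem_toFinset.mpr hg⟩
  obtain ⟨f, hf_mem, hf_max⟩ := Finset.exists_max_image p.edges.toFinset ew hnonempty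
  rw [List.mem_toFinset] at hf_mem
  have hf_max' : ∀ g ∈ p.edges, ew g ≤ ew f := fun g hg => hf_max g (List.mem_toFinset.mpr hg)
  obtain ⟨hfkt, hfne⟩ := hedge f hf_mem
  have hr_ab : ¬ (resW A (ew s(a, b))).Reachable a b := he.2
  rcases lt_or_gt_of_ne (fun h => hfne (ew_inj h)) with hlt | hgt
  · -- all edges of p are smaller than s(a,b): contradiction with he.2
    refine hr_ab ⟨p.transfer (resW A (ew s(a, b))) ?_⟩
    intro g hg
    obtain ⟨hg1, hg2⟩ := hedge g hg
    induction g using Sym2.ind with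
    | _ c d =>
    rw [SimpleGraph.mem_edgeSet] at hg1 ⊢
    refine ⟨hg1.1, ?_⟩
    have := hf_max' _ hg
    omega
  · -- f = max edge, bigger than s(a,b): contradiction with f ∈ kt A
    induction f using Sym2.ind with
    | _ c d =>
    rw [SimpleGraph.mem_edgeSet] at hfkt
    refine hfkt.2 (surgery p hnd hf_mem ?_ ?_)
    · intro g hg hgne
      obtain ⟨hg1, hg2⟩ := hedge g hg
      induction g using Sym2.ind with
      | _ c' d' =>
      rw [SimpleGraph.mem_edgeSet] at hg1 ⊢
      refine ⟨hg1.1, ?_⟩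
      have h1 := hf_max' _ hg
      have h2 : ew s(c', d') ≠ ew s(c, d) := fun h => hgne (ew_inj h)
      omega
    · exact SimpleGraph.Adj.reachable ⟨he.1, hgt⟩

lemma reach_sup_edge {G : SimpleGraph V} {c d : V} (hcd : G.Reachable c d) :
    ∀ {u v : V}, (G ⊔ fromEdgeSet {s(c, d)}).Reachable u v → G.Reachable u v := by
  intro u v h
  obtain ⟨p⟩ := h
  induction p with
  | nil => exact Reachable.refl _
  | @cons a x v' ha q ih =>
    refine Reachable.trans ?_ ih
    rw [SimpleGraph.sup_adj, SimpleGraph.fromEdgeSet_adj, Set.mem_singleton_iff] at ha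
    rcases ha with ha | ⟨heq, hne⟩
    · exact ha.reachable
    · exact reach_congr_sym2 heq hcd

lemma kt_deleteEdge {G : SimpleGraph V} {c d : V}
    (hr : (resW (kt G) (ew s(c, d))).Reachable c d) :
    kt (G.deleteEdges {s(c, d)}) = kt G := by
  have hrG : (resW G (ew s(c, d))).Reachable c d :=
    hr.mono (resW_mono (kt_le G) _)
  have hne_kt : ∀ a b : V, s(a, b) = s(c, d) → ¬ (kt G).Adj a b := by
    intro a b h hadj
    refine hadj.2 ?_
    have : ew s(a, b) = ew s(c, d) := by rw [h]
    rw [this]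
    exact reach_congr_sym2 h hrG
  have hle : kt G ≤ G.deleteEdges {s(c, d)} := by
    intro a b hadj
    rw [SimpleGraph.deleteEdges_adj]
    refine ⟨kt_le G hadj, ?_⟩
    rw [Set.mem_singleton_iff]
    exact fun h => hne_kt a b h hadj
  have hreach : ∀ (n : ℕ) (u v : V),
      (resW (G.deleteEdges {s(c, d)}) n).Reachable u v ↔ (resW G n).Reachable u v := by
    intro n u v
    by_cases hn : ew s(c, d) < n
    · refine ⟨fun h => h.mono (resW_mono (SimpleGraph.deleteEdges_le _) n), fun h => ?_⟩
      have hcd' : (resW (G.deleteEdges {s(c, d)}) n).Reachable c d := by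
        refine hr.mono (le_trans (resW_mono hle _) (resW_mono_nat _ hn.le))
      refine reach_sup_edge hcd' (h.mono ?_)
      intro a b hab
      rw [SimpleGraph.sup_adj]
      by_cases hab_e : s(a, b) = s(c, d)
      · right
        rw [SimpleGraph.fromEdgeSet_adj, Set.mem_singleton_iff]
        exact ⟨hab_e, hab.1.ne⟩
      · left
        refine ⟨?_, hab.2⟩
        rw [SimpleGraph.deleteEdges_adj, Set.mem_singleton_iff]
        exact ⟨hab.1, hab_e⟩
    · have heq : resW (G.deleteEdges {s(c, d)}) n = resW G n := by
        ext a b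
        simp only [resW_adj, SimpleGraph.deleteEdges_adj, Set.mem_singleton_iff]
        constructor
        · rintro ⟨⟨h1, _⟩, h3⟩
          exact ⟨h1, h3⟩
        · rintro ⟨h1, h3⟩
          refine ⟨⟨h1, fun h => hn ?_⟩, h3⟩
          rwa [← (by rw [h] : ew s(a, b) = ew s(c, d))]
      rw [heq]
  ext a b
  simp only [kt_adj, SimpleGraph.deleteEdges_adj, Set.mem_singleton_iff]
  by_cases hab_e : s(a, b) = s(c, d)
  · constructor
    · rintro ⟨⟨_, h2⟩, _⟩
      exact absurd hab_e h2
    · intro h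
      exact absurd h (by simpa [kt_adj] using hne_kt a b hab_e)
  · rw [hreach]
    tauto

lemma kt_addEdge {G : SimpleGraph V} {c d : V} (hnadj : ¬ G.Adj c d) (hcd_ne : c ≠ d)
    (hr : (resW (kt G) (ew s(c, d))).Reachable c d) :
    kt (G ⊔ fromEdgeSet {s(c, d)}) = kt G := by
  have hrG : (resW G (ew s(c, d))).Reachable c d :=
    hr.mono (resW_mono (kt_le G) _)
  have hleG' : G ≤ G ⊔ fromEdgeSet {s(c, d)} := le_sup_left
  have hreach : ∀ (n : ℕ) (u v : V),
      (resW (G ⊔ fromEdgeSet {s(c, d)}) n).Reachable u v ↔ (resW G n).Reachable u v := by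
    intro n u v
    by_cases hn : ew s(c, d) < n
    · refine ⟨fun h => ?_, fun h => h.mono (resW_mono hleG' n)⟩
      have hcd' : (resW G n).Reachable c d := hrG.mono (resW_mono_nat _ hn.le)
      refine reach_sup_edge hcd' (h.mono ?_)
      intro a b hab
      rw [SimpleGraph.sup_adj]
      rcases hab with ⟨hab1, hab2⟩
      rw [SimpleGraph.sup_adj, SimpleGraph.fromEdgeSet_adj, Set.mem_singleton_iff] at hab1
      rcases hab1 with h1 | ⟨h1, h2⟩
      · exact Or.inl ⟨h1, hab2⟩
      · right
        rw [SimpleGraph.fromEdgeSet_adj, Set.mem_singleton_iff]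
        exact ⟨h1, h2⟩
    · have heq : resW (G ⊔ fromEdgeSet {s(c, d)}) n = resW G n := by
        ext a b
        simp only [resW_adj, SimpleGraph.sup_adj, SimpleGraph.fromEdgeSet_adj,
          Set.mem_singleton_iff]
        constructor
        · rintro ⟨h1 | ⟨h1, _⟩, h3⟩
          · exact ⟨h1, h3⟩
          · exact absurd (by rwa [← (by rw [h1] : ew s(a, b) = ew s(c, d))]) hn
        · rintro ⟨h1, h3⟩
          exact ⟨Or.inl h1, h3⟩
      rw [heq]
  ext a b
  simp only [kt_adj, SimpleGraph.sup_adj, SimpleGraph.fromEdgeSet_adj, Set.mem_singleton_iff]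
  by_cases hab_e : s(a, b) = s(c, d)
  · have hGab : ¬ G.Adj a b := by
      rw [adj_congr_sym2 hab_e]
      exact hnadj
    have hRab : (resW (G ⊔ fromEdgeSet {s(c, d)}) (ew s(a, b))).Reachable a b := by
      have : ew s(a, b) = ew s(c, d) := by rw [hab_e]
      rw [this]
      exact reach_congr_sym2 hab_e (hr.mono (resW_mono (le_trans (kt_le G) hleG') _))
    constructor
    · rintro ⟨_, h2⟩
      exact absurd hRab h2
    · rintro ⟨h1, _⟩
      exact absurd h1 hGab
  · rw [hreach]
    constructor
    · rintro ⟨h1 | ⟨h1, _⟩, h2⟩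
      · exact ⟨h1, h2⟩
      · exact absurd h1 hab_e
    · rintro ⟨h1, h2⟩
      exact ⟨Or.inl h1, h2⟩

lemma kt_connected {A : SimpleGraph V} (h : A.Connected) : (kt A).Connected := by
  rw [connected_iff] at h ⊢
  exact ⟨fun u v => reach_kt (h.1 u v), h.2⟩

lemma kt_isTree {A : SimpleGraph V} (h : A.Connected) : (kt A).IsTree :=
  ⟨kt_connected h, kt_isAcyclic A⟩

lemma del_sup {G : SimpleGraph V} {c d : V} (h : G.Adj c d) :
    G.deleteEdges {s(c, d)} ⊔ fromEdgeSet {s(c, d)} = G := by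
  ext a b
  rw [SimpleGraph.sup_adj, SimpleGraph.deleteEdges_adj, SimpleGraph.fromEdgeSet_adj]
  simp only [Set.mem_singleton_iff]
  constructor
  · rintro (⟨h1, _⟩ | ⟨h1, _⟩)
    · exact h1
    · rw [adj_congr_sym2 h1]
      exact h
  · intro h1
    by_cases he : s(a, b) = s(c, d)
    · exact Or.inr ⟨he, h1.ne⟩
    · exact Or.inl ⟨h1, he⟩

lemma sup_del {G : SimpleGraph V} {c d : V} (h : ¬ G.Adj c d) :
    (G ⊔ fromEdgeSet {s(c, d)}).deleteEdges {s(c, d)} = G := by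
  ext a b
  rw [SimpleGraph.deleteEdges_adj, SimpleGraph.sup_adj, SimpleGraph.fromEdgeSet_adj]
  simp only [Set.mem_singleton_iff]
  constructor
  · rintro ⟨h1 | ⟨h1, _⟩, h2⟩
    · exact h1
    · exact absurd h1 h2
  · intro h1
    refine ⟨Or.inl h1, fun he => h ?_⟩
    rw [← adj_congr_sym2 he]
    exact h1

lemma card_del {G : SimpleGraph V} {c d : V}
    [Fintype ((G.deleteEdges {s(c, d)}).edgeSet)] [Fintype G.edgeSet] (h : G.Adj c d) :
    (G.deleteEdges {s(c, d)}).edgeFinset.card + 1 = G.edgeFinset.card := by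
  have he : (G.deleteEdges {s(c, d)}).edgeFinset = G.edgeFinset.erase s(c, d) := by
    ext g
    simp only [mem_edgeFinset, edgeSet_deleteEdges, Set.mem_diff, Set.mem_singleton_iff,
      Finset.mem_erase]
    tauto
  rw [he, Finset.card_erase_add_one (by rw [mem_edgeFinset, mem_edgeSet]; exact h)]

lemma card_add {G : SimpleGraph V} {c d : V}
    [Fintype ((G ⊔ fromEdgeSet {s(c, d)}).edgeSet)] [Fintype G.edgeSet]
    (hne : c ≠ d) (h : ¬ G.Adj c d) :
    (G ⊔ fromEdgeSet {s(c, d)}).edgeFinset.card = G.edgeFinset.card + 1 := by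
  have he : (G ⊔ fromEdgeSet {s(c, d)}).edgeFinset = insert s(c, d) G.edgeFinset := by
    ext g
    simp only [mem_edgeFinset, edgeSet_sup, edgeSet_fromEdgeSet, Set.mem_union, Set.mem_diff,
      Set.mem_singleton_iff, Finset.mem_insert, Set.mem_setOf_eq]
    constructor
    · rintro (h1 | ⟨h1, _⟩)
      exacts [Or.inr h1, Or.inl h1]
    · rintro (rfl | h1)
      · exact Or.inr ⟨rfl, by simp [Sym2.mk_isDiag_iff, hne]⟩
      · exact Or.inl h1
  rw [he, Finset.card_insert_of_notMem (by rw [mem_edgeFinset, mem_edgeSet]; exact h)]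

lemma ncard_del {G : SimpleGraph V} {c d : V} (h : G.Adj c d) :
    (G.deleteEdges {s(c, d)}).edgeSet.ncard + 1 = G.edgeSet.ncard := by
  rw [Set.ncard_eq_toFinset_card', Set.ncard_eq_toFinset_card']
  exact card_del h

lemma ncard_add {G : SimpleGraph V} {c d : V} (hne : c ≠ d) (h : ¬ G.Adj c d) :
    (G ⊔ fromEdgeSet {s(c, d)}).edgeSet.ncard = G.edgeSet.ncard + 1 := by
  rw [Set.ncard_eq_toFinset_card', Set.ncard_eq_toFinset_card']
  exact card_add hne h

theorem key [Fintype (SimpleGraph V)] (H : SimpleGraph V) :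
    |∑ G : SimpleGraph V, if G.Connected ∧ G ≤ H then (-1 : ℝ) ^ G.edgeSet.ncard else 0|
      ≤ ∑ T : SimpleGraph V, if T.IsTree ∧ T ≤ H then (1 : ℝ) else 0 := by
  rw [← Finset.sum_filter, ← Finset.sum_filter]
  set s := Finset.univ.filter (fun G : SimpleGraph V => G.Connected ∧ G ≤ H) with hs
  set t := Finset.univ.filter (fun T : SimpleGraph V => T.IsTree ∧ T ≤ H) with ht
  have hmap : ∀ G ∈ s, kt G ∈ t := by
    intro G hG
    rw [hs, Finset.mem_filter] at hG
    rw [ht, Finset.mem_filter]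
    exact ⟨Finset.mem_univ _, kt_isTree hG.2.1, le_trans (kt_le G) hG.2.2⟩
  rw [← Finset.sum_fiberwise_of_maps_to hmap (fun G => (-1 : ℝ) ^ G.edgeSet.ncard)]
  refine le_trans (Finset.abs_sum_le_sum_abs _ _) (Finset.sum_le_sum ?_)
  intro T hT
  by_cases hex : ∃ G ∈ s.filter (fun G => kt G = T), G ≠ T
  · obtain ⟨G₀, hG₀, hG₀ne⟩ := hex
    rw [Finset.mem_filter] at hG₀
    obtain ⟨hG₀s, hktG₀⟩ := hG₀
    rw [hs, Finset.mem_filter] at hG₀s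
    obtain ⟨-, hG₀conn, hG₀le⟩ := hG₀s
    have hTle : T ≤ G₀ := hktG₀ ▸ kt_le G₀
    have hTconn : T.Connected := hktG₀ ▸ kt_connected hG₀conn
    have hedge : ∃ e, e ∈ G₀.edgeSet ∧ e ∉ T.edgeSet := by
      by_contra hcon
      push_neg at hcon
      exact hG₀ne (le_antisymm (fun a b hab =>
        (T.mem_edgeSet).mp (hcon _ ((G₀.mem_edgeSet).mpr hab))) hTle)
    obtain ⟨e, heG₀, heT⟩ := hedge
    revert heG₀ heT
    induction e using Sym2.ind with
    | _ c d =>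
    intro heG₀ heT
    rw [SimpleGraph.mem_edgeSet] at heG₀
    rw [SimpleGraph.mem_edgeSet] at heT
    have hcd_ne : c ≠ d := heG₀.ne
    have hHcd : H.Adj c d := hG₀le heG₀
    have hrT : (resW T (ew s(c, d))).Reachable c d := by
      have h1 : (resW G₀ (ew s(c, d))).Reachable c d := by
        by_contra hcon
        exact heT (by rw [← hktG₀]; exact ⟨heG₀, hcon⟩)
      have h2 := reach_resW_kt h1
      rwa [hktG₀] at h2
    have hzero : ∑ G ∈ s.filter (fun G => kt G = T), (-1 : ℝ) ^ G.edgeSet.ncard = 0 := by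
      refine Finset.sum_involution
        (fun G _ => if G.Adj c d then G.deleteEdges {s(c, d)} else G ⊔ fromEdgeSet {s(c, d)})
        ?_ ?_ ?_ ?_
      · intro G hG
        by_cases hA : G.Adj c d
        · rw [if_pos hA, ← ncard_del hA, pow_succ]
          ring
        · rw [if_neg hA, ncard_add hcd_ne hA, pow_succ]
          ring
      · intro G hG _
        by_cases hA : G.Adj c d
        · rw [if_pos hA]
          intro hEq
          have h2 : (G.deleteEdges {s(c, d)}).Adj c d := by rw [hEq]; exact hA
          rw [SimpleGraph.deleteEdges_adj, Set.mem_singleton_iff] at h2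
          exact h2.2 rfl
        · rw [if_neg hA]
          intro hEq
          refine hA ?_
          rw [← hEq, SimpleGraph.sup_adj, SimpleGraph.fromEdgeSet_adj]
          exact Or.inr ⟨rfl, hcd_ne⟩
      · intro G hG
        rw [Finset.mem_filter] at hG
        obtain ⟨hGs, hktG⟩ := hG
        rw [hs, Finset.mem_filter] at hGs
        obtain ⟨-, hGconn, hGle⟩ := hGs
        have hrG : (resW (kt G) (ew s(c, d))).Reachable c d := by rw [hktG]; exact hrT
        by_cases hA : G.Adj c d
        · rw [if_pos hA]
          have hktG' : kt (G.deleteEdges {s(c, d)}) = T := by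
            rw [kt_deleteEdge hrG, hktG]
          rw [Finset.mem_filter, hs, Finset.mem_filter]
          refine ⟨⟨Finset.mem_univ _, ?_, le_trans (SimpleGraph.deleteEdges_le _) hGle⟩, hktG'⟩
          exact hTconn.mono (hktG' ▸ kt_le _)
        · rw [if_neg hA]
          have hktG' : kt (G ⊔ fromEdgeSet {s(c, d)}) = T := by
            rw [kt_addEdge hA hcd_ne hrG, hktG]
          rw [Finset.mem_filter, hs, Finset.mem_filter]
          refine ⟨⟨Finset.mem_univ _, ?_, ?_⟩, hktG'⟩
          · exact hTconn.mono (hktG' ▸ kt_le _)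
          · refine sup_le hGle ?_
            intro a b hab
            rw [SimpleGraph.fromEdgeSet_adj, Set.mem_singleton_iff] at hab
            rw [adj_congr_sym2 hab.1]
            exact hHcd
      · intro G hG
        by_cases hA : G.Adj c d
        · rw [if_pos hA]
          have hA' : ¬ (G.deleteEdges {s(c, d)}).Adj c d := by
            rw [SimpleGraph.deleteEdges_adj, Set.mem_singleton_iff]
            rintro ⟨-, hcon⟩
            exact hcon rfl
          rw [if_neg hA']
          exact del_sup hA
        · rw [if_neg hA]
          have hA' : (G ⊔ fromEdgeSet {s(c, d)}).Adj c d := by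
            rw [SimpleGraph.sup_adj, SimpleGraph.fromEdgeSet_adj]
            exact Or.inr ⟨rfl, hcd_ne⟩
          rw [if_pos hA']
          exact sup_del hA
    rw [hzero, abs_zero]
    exact zero_le_one
  · push_neg at hex
    have hsub : s.filter (fun G => kt G = T) ⊆ {T} :=
      fun G hG => Finset.mem_singleton.mpr (hex G hG)
    rcases Finset.subset_singleton_iff.mp hsub with h | h
    · rw [h]
      simp
    · rw [h, Finset.sum_singleton, abs_pow, abs_neg, abs_one, one_pow]

end TreeIneqAux


open TreeIneqAux SimpleGraph in
/-- **Tree inequality** for the cumulants of the exclusion: for every `k ≥ 1`,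
`|φ_k(x_1,…,x_k)| ≤ Σ_{T tree on {1,…,k}} ∏_{{i,j} ∈ E_T} 1_{dist(x_i,x_j) ≤ ε}`. -/
theorem tree_inequality {X : Type*} [MetricSpace X] (k : ℕ) (hk : 1 ≤ k)
    (ε : ℝ) (hε : 0 < ε) (x : Fin k → X) :
    |exclCumulant k x ε| ≤
      ∑ T : SimpleGraph (Fin k),
        if T.IsTree then ∏ e ∈ T.edgeFinset, exclIndicator x ε e else 0 := by
  set H : SimpleGraph (Fin k) :=
    { Adj := fun i j => i ≠ j ∧ dist (x i) (x j) ≤ ε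
      symm := ⟨by
        rintro i j ⟨h1, h2⟩
        exact ⟨h1.symm, le_trans (le_of_eq (dist_comm (x j) (x i))) h2⟩⟩
      loopless := ⟨fun i h => h.1 rfl⟩ } with hH
  have hind1 : ∀ (G : SimpleGraph (Fin k)), G ≤ H → ∀ e ∈ G.edgeFinset,
      exclIndicator x ε e = 1 := by
    intro G hle e he
    induction e using Sym2.ind with
    | _ i j =>
    rw [SimpleGraph.mem_edgeFinset, SimpleGraph.mem_edgeSet] at he
    have hd := (hle he).2
    simp [exclIndicator, hd]
  have hwit : ∀ (G : SimpleGraph (Fin k)), ¬ G ≤ H →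
      (∏ e ∈ G.edgeFinset, (exclIndicator x ε e)) = 0 := by
    intro G hle
    obtain ⟨a, b, hab, hnab⟩ : ∃ a b, G.Adj a b ∧ ¬ H.Adj a b := by
      by_contra hcon
      push_neg at hcon
      refine hle ?_
      intro a b hab
      exact hcon a b hab
    refine Finset.prod_eq_zero (i := s(a, b)) ?_ ?_
    · rw [SimpleGraph.mem_edgeFinset, SimpleGraph.mem_edgeSet]
      exact hab
    · have hd : ¬ dist (x a) (x b) ≤ ε := fun h => hnab ⟨hab.ne, h⟩
      simp [exclIndicator, hd]
  have hLHS : exclCumulant k x ε =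
      ∑ G : SimpleGraph (Fin k),
        if G.Connected ∧ G ≤ H then (-1 : ℝ) ^ G.edgeSet.ncard else 0 := by
    rw [exclCumulant]
    refine Finset.sum_congr rfl ?_
    intro G _
    by_cases hC : G.Connected
    · rw [if_pos hC]
      by_cases hle : G ≤ H
      · rw [if_pos ⟨hC, hle⟩]
        have hncard : G.edgeSet.ncard = G.edgeFinset.card := Set.ncard_eq_toFinset_card' _
        calc ∏ e ∈ G.edgeFinset, (-(exclIndicator x ε e))
            = ∏ _e ∈ G.edgeFinset, (-1 : ℝ) :=
              Finset.prod_congr rfl (fun e he => by rw [hind1 G hle e he])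
          _ = (-1 : ℝ) ^ G.edgeFinset.card := Finset.prod_const _
          _ = (-1 : ℝ) ^ G.edgeSet.ncard := by rw [hncard]
      · rw [if_neg (fun hcon => hle hcon.2)]
        calc ∏ e ∈ G.edgeFinset, (-(exclIndicator x ε e))
            = (-1 : ℝ) ^ G.edgeFinset.card * ∏ e ∈ G.edgeFinset, (exclIndicator x ε e) := by
              rw [← Finset.prod_const, ← Finset.prod_mul_distrib]
              exact Finset.prod_congr rfl (fun e _ => by ring)
          _ = 0 := by rw [hwit G hle, mul_zero]
    · rw [if_neg hC, if_neg (fun hcon => hC hcon.1)]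
  have hRHS : (∑ T : SimpleGraph (Fin k),
        if T.IsTree then ∏ e ∈ T.edgeFinset, exclIndicator x ε e else 0)
      = ∑ T : SimpleGraph (Fin k), if T.IsTree ∧ T ≤ H then (1 : ℝ) else 0 := by
    refine Finset.sum_congr rfl ?_
    intro T _
    by_cases hT : T.IsTree
    · rw [if_pos hT]
      by_cases hle : T ≤ H
      · rw [if_pos ⟨hT, hle⟩]
        exact Finset.prod_eq_one (fun e he => hind1 T hle e he)
      · rw [if_neg (fun hcon => hle hcon.2)]
        exact hwit T hle
    · rw [if_neg hT, if_neg (fun hcon => hT hcon.1)]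
  rw [hLHS, hRHS]
  exact TreeIneqAux.key H
end

section
/- For every integer n ≥ 1 and every family of real numbers a = (a_{ij})_{1 ≤ i < j ≤ n}, one has the identity ∏_{1 ≤ i < j ≤ n} (1 − a_{ij}) = Σ_{σ partition of {1,…,n}} ∏_{B block of σ} φ_B(a), where for each nonempty subset B ⊆ {1,…,n} the cluster value is φ_B(a) := Σ_{G connected simple graph with vertex set B} ∏_{{i,j} ∈ E_G} (−a_{ij}) (so φ_B(a) = 1 when B is a singleton). The sum on the right runs over all set partitions of {1,…,n} into nonempty blocks. -/
open scoped Classical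

/-- The cluster value `φ_B(a) = Σ_{G connected graph on B} ∏_{{i,j} ∈ E_G} (−a_{ij})`
attached to a subset `B ⊆ {1,…,n}` and a family `a` indexed by unordered pairs. -/
noncomputable def clusterValue {n : ℕ} (a : Sym2 (Fin n) → ℝ) (B : Finset (Fin n)) : ℝ :=
  ∑ G : SimpleGraph B,
    if G.Connected then ∏ e ∈ G.edgeFinset, (-(a (e.map Subtype.val))) else 0

namespace ClusterAux

open Finset SimpleGraph

variable {n : ℕ}

/-- Restriction of a graph to the vertices in a finset. -/
def restrict (G : SimpleGraph (Fin n)) (B : Finset (Fin n)) : SimpleGraph B :=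
  G.comap Subtype.val

/-- The partition of `Fin n` into connected components of `G`. -/
noncomputable def compPartition (G : SimpleGraph (Fin n)) :
    Finpartition (Finset.univ : Finset (Fin n)) :=
  Finpartition.ofSetoid G.reachableSetoid

lemma parts_eq_image_part {α : Type*} [DecidableEq α] [Fintype α]
    (σ : Finpartition (Finset.univ : Finset α)) :
    σ.parts = Finset.univ.image σ.part := by
  ext B
  constructor
  · intro hB
    obtain ⟨x, hx⟩ := σ.nonempty_of_mem_parts hB
    exact Finset.mem_image.2 ⟨x, Finset.mem_univ x, σ.part_eq_of_mem hB hx⟩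
  · intro hB
    obtain ⟨x, -, rfl⟩ := Finset.mem_image.1 hB
    exact σ.part_mem.2 (Finset.mem_univ x)

lemma compPartition_eq_iff (G : SimpleGraph (Fin n))
    (σ : Finpartition (Finset.univ : Finset (Fin n))) :
    compPartition G = σ ↔ ∀ a b, G.Reachable a b ↔ b ∈ σ.part a := by
  constructor
  · rintro rfl a b
    exact (Finpartition.mem_part_ofSetoid_iff_rel (s := G.reachableSetoid)).symm
  · intro h
    ext1
    rw [parts_eq_image_part (compPartition G), parts_eq_image_part σ]
    apply Finset.image_congr
    intro x _
    ext b
    rw [show (compPartition G).part x = (Finpartition.ofSetoid G.reachableSetoid).part x from rfl,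
      Finpartition.mem_part_ofSetoid_iff_rel]
    exact h x b

/-- Glue a family of graphs on the blocks of a partition into one graph. -/
def glue (σ : Finpartition (Finset.univ : Finset (Fin n)))
    (g : ∀ B ∈ σ.parts, SimpleGraph B) : SimpleGraph (Fin n) where
  Adj i j := ∃ (B : Finset (Fin n)) (hB : B ∈ σ.parts) (hi : i ∈ B) (hj : j ∈ B),
      (g B hB).Adj ⟨i, hi⟩ ⟨j, hj⟩
  symm := by
    constructor
    rintro i j ⟨B, hB, hi, hj, h⟩
    exact ⟨B, hB, hj, hi, h.symm⟩
  loopless := by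
    constructor
    rintro i ⟨B, hB, hi, hj, h⟩
    exact (g B hB).loopless.irrefl _ h

lemma glue_adj {σ : Finpartition (Finset.univ : Finset (Fin n))}
    {g : ∀ B ∈ σ.parts, SimpleGraph B} {i j : Fin n} :
    (glue σ g).Adj i j ↔ ∃ (B : Finset (Fin n)) (hB : B ∈ σ.parts) (hi : i ∈ B) (hj : j ∈ B),
      (g B hB).Adj ⟨i, hi⟩ ⟨j, hj⟩ := Iff.rfl

lemma reachable_restrict (G : SimpleGraph (Fin n)) (B : Finset (Fin n))
    (hcl : ∀ i j, G.Adj i j → i ∈ B → j ∈ B) :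
    ∀ {x y : Fin n} (_ : G.Walk x y) (hx : x ∈ B),
      ∃ hy : y ∈ B, (restrict G B).Reachable ⟨x, hx⟩ ⟨y, hy⟩ := by
  intro x y p
  induction p with
  | nil => exact fun hx => ⟨hx, Reachable.refl _⟩
  | @cons u v w h p ih =>
    intro hu
    have hv : v ∈ B := hcl u v h hu
    obtain ⟨hw, hr⟩ := ih hv
    exact ⟨hw, (SimpleGraph.Adj.reachable (show (restrict G B).Adj ⟨u, hu⟩ ⟨v, hv⟩ from h)).trans hr⟩

lemma part_eq_of_reachable (σ : Finpartition (Finset.univ : Finset (Fin n)))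
    (H : SimpleGraph (Fin n)) (hcl : ∀ i j, H.Adj i j → σ.part i = σ.part j) :
    ∀ {x y : Fin n}, H.Reachable x y → σ.part x = σ.part y := by
  intro x y h
  obtain ⟨p⟩ := h
  induction p with
  | nil => rfl
  | @cons u v w h p ih => exact (hcl u v h).trans ih

lemma compPartition_glue (σ : Finpartition (Finset.univ : Finset (Fin n)))
    (g : ∀ B ∈ σ.parts, SimpleGraph B)
    (hg : ∀ B (hB : B ∈ σ.parts), (g B hB).Connected) :
    compPartition (glue σ g) = σ := by
  rw [compPartition_eq_iff]
  intro x y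
  constructor
  · intro h
    have hcl : ∀ i j, (glue σ g).Adj i j → σ.part i = σ.part j := by
      rintro i j ⟨B, hB, hi, hj, -⟩
      rw [σ.part_eq_of_mem hB hi, σ.part_eq_of_mem hB hj]
    rw [part_eq_of_reachable σ (glue σ g) hcl h]
    exact σ.mem_part (Finset.mem_univ y)
  · intro hy
    have hB : σ.part x ∈ σ.parts := σ.part_mem.2 (Finset.mem_univ x)
    have hx : x ∈ σ.part x := σ.mem_part (Finset.mem_univ x)
    let hom : g (σ.part x) hB →g glue σ g :=
      ⟨Subtype.val, fun {u v} h => ⟨σ.part x, hB, u.2, v.2, h⟩⟩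
    exact ((hg (σ.part x) hB).preconnected ⟨x, hx⟩ ⟨y, hy⟩).map hom

lemma restrict_connected {G : SimpleGraph (Fin n)}
    {σ : Finpartition (Finset.univ : Finset (Fin n))} (h : compPartition G = σ)
    {B : Finset (Fin n)} (hB : B ∈ σ.parts) : (restrict G B).Connected := by
  rw [compPartition_eq_iff] at h
  have hcl : ∀ i j, G.Adj i j → i ∈ B → j ∈ B := by
    intro i j hij hi
    have hpart : σ.part i = B := σ.part_eq_of_mem hB hi
    rw [← hpart]
    exact (h i j).1 hij.reachable
  obtain ⟨x, hx⟩ := σ.nonempty_of_mem_parts hB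
  rw [connected_iff]
  refine ⟨?_, ⟨⟨x, hx⟩⟩⟩
  rintro ⟨u, hu⟩ ⟨v, hv⟩
  have hreach : G.Reachable u v := by
    refine (h u v).2 ?_
    rw [σ.part_eq_of_mem hB hu]
    exact hv
  obtain ⟨p⟩ := hreach
  obtain ⟨hv', hr⟩ := reachable_restrict G B hcl p hu
  exact hr

lemma glue_restrict {G : SimpleGraph (Fin n)}
    {σ : Finpartition (Finset.univ : Finset (Fin n))} (h : compPartition G = σ) :
    glue σ (fun B _ => restrict G B) = G := by
  rw [compPartition_eq_iff] at h
  ext i j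
  constructor
  · rintro ⟨B, hB, hi, hj, hadj⟩
    exact hadj
  · intro hadj
    exact ⟨σ.part i, σ.part_mem.2 (Finset.mem_univ i), σ.mem_part (Finset.mem_univ i),
      (h i j).1 hadj.reachable, hadj⟩

lemma restrict_glue {σ : Finpartition (Finset.univ : Finset (Fin n))}
    {g : ∀ B ∈ σ.parts, SimpleGraph B} {B : Finset (Fin n)} (hB : B ∈ σ.parts) :
    restrict (glue σ g) B = g B hB := by
  ext x y
  constructor
  · rintro ⟨B', hB', hi, hj, hadj⟩
    have hBB : B' = B := σ.eq_of_mem_parts hB' hB hi x.2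
    subst hBB
    exact hadj
  · intro hadj
    exact ⟨B, hB, x.2, y.2, hadj⟩

lemma glue_edgeFinset (σ : Finpartition (Finset.univ : Finset (Fin n)))
    (g : ∀ B ∈ σ.parts, SimpleGraph B) :
    (glue σ g).edgeFinset =
      σ.parts.attach.biUnion
        (fun B => (g B.1 B.2).edgeFinset.image (Sym2.map Subtype.val)) := by
  ext e
  induction e using Sym2.ind with
  | _ i j =>
    simp only [mem_edgeFinset, mem_biUnion, mem_image, mem_attach, true_and, Subtype.exists]
    rw [mem_edgeSet, glue_adj]
    constructor
    · rintro ⟨B, hB, hi, hj, hadj⟩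
      exact ⟨B, hB, s(⟨i, hi⟩, ⟨j, hj⟩), hadj, by rw [Sym2.map_pair_eq]⟩
    · rintro ⟨B, hB, e', he', hmap⟩
      induction e' using Sym2.ind with
      | _ x y =>
        rw [Sym2.map_pair_eq, Sym2.eq_iff] at hmap
        rcases hmap with ⟨rfl, rfl⟩ | ⟨rfl, rfl⟩
        · exact ⟨B, hB, x.2, y.2, he'⟩
        · exact ⟨B, hB, y.2, x.2, he'.symm⟩

lemma glue_weight (a : Sym2 (Fin n) → ℝ) (σ : Finpartition (Finset.univ : Finset (Fin n)))
    (g : ∀ B ∈ σ.parts, SimpleGraph B) :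
    ∏ e ∈ (glue σ g).edgeFinset, (-(a e)) =
      ∏ B ∈ σ.parts.attach, ∏ e ∈ (g B.1 B.2).edgeFinset, (-(a (e.map Subtype.val))) := by
  have hsub : ∀ (B : {x // x ∈ σ.parts}) (e : Sym2 (Fin n)),
      e ∈ (g B.1 B.2).edgeFinset.image (Sym2.map Subtype.val) → ∀ v ∈ e, v ∈ B.1 := by
    rintro B e he v hv
    obtain ⟨e', -, rfl⟩ := Finset.mem_image.1 he
    obtain ⟨u, -, rfl⟩ := Sym2.mem_map.1 hv
    exact u.2
  have hdisj : Set.PairwiseDisjoint (↑σ.parts.attach : Set {x // x ∈ σ.parts})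
      (fun B => (g B.1 B.2).edgeFinset.image (Sym2.map Subtype.val)) := by
    intro B _ B' _ hne
    refine Finset.disjoint_left.2 fun {e} he he' => ?_
    have hv : ∃ v, v ∈ e := by
      induction e using Sym2.ind with
      | _ i j => exact ⟨i, Sym2.mem_mk_left i j⟩
    obtain ⟨v, hv⟩ := hv
    have h1 : v ∈ B.1 := hsub B e he v hv
    have h2 : v ∈ B'.1 := hsub B' e he' v hv
    have hBB : B.1 ≠ B'.1 := fun hh => hne (Subtype.ext hh)
    exact Finset.disjoint_left.1
      (σ.disjoint (Finset.mem_coe.2 B.2) (Finset.mem_coe.2 B'.2) hBB) h1 h2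
  rw [glue_edgeFinset, Finset.prod_biUnion hdisj]
  refine Finset.prod_congr rfl fun B _ => ?_
  rw [Finset.prod_image]
  intro x _ y _ hxy
  exact Sym2.map.injective Subtype.val_injective hxy

lemma sum_fiber_eq (a : Sym2 (Fin n) → ℝ)
    (σ : Finpartition (Finset.univ : Finset (Fin n))) :
    ∑ G ∈ Finset.univ.filter (fun G : SimpleGraph (Fin n) => compPartition G = σ),
      ∏ e ∈ G.edgeFinset, (-(a e)) = ∏ B ∈ σ.parts, clusterValue a B := by
  have hcv : ∀ B ∈ σ.parts, clusterValue a B =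
      ∑ H ∈ (Finset.univ : Finset (SimpleGraph B)),
        (if H.Connected then ∏ e ∈ H.edgeFinset, (-(a (e.map Subtype.val))) else 0) :=
    fun B _ => rfl
  rw [Finset.prod_congr rfl hcv, Finset.prod_sum]
  rw [← Finset.sum_filter_add_sum_filter_not (σ.parts.pi fun B => Finset.univ)
      (fun g : ∀ B ∈ σ.parts, SimpleGraph B => ∀ B (hB : B ∈ σ.parts), (g B hB).Connected)]
  have hzero : ∑ g ∈ (σ.parts.pi fun B => Finset.univ).filter
      (fun g : ∀ B ∈ σ.parts, SimpleGraph B => ¬ ∀ B (hB : B ∈ σ.parts), (g B hB).Connected),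
      ∏ B ∈ σ.parts.attach,
        (if (g B.1 B.2).Connected then
          ∏ e ∈ (g B.1 B.2).edgeFinset, (-(a (e.map Subtype.val))) else 0) = 0 := by
    refine Finset.sum_eq_zero fun g hg => ?_
    obtain ⟨B, hB, hnc⟩ := by
      have := (Finset.mem_filter.1 hg).2
      push_neg at this
      exact this
    exact Finset.prod_eq_zero (Finset.mem_attach _ ⟨B, hB⟩) (if_neg hnc)
  rw [hzero, add_zero]
  symm
  refine Finset.sum_nbij' (fun g => glue σ g) (fun G => fun B _ => restrict G B) ?_ ?_ ?_ ?_ ?_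
  · intro g hg
    rw [Finset.mem_filter] at hg
    exact Finset.mem_filter.2 ⟨Finset.mem_univ _, compPartition_glue σ g hg.2⟩
  · intro G hG
    rw [Finset.mem_filter] at hG
    refine Finset.mem_filter.2 ⟨Finset.mem_pi.2 fun B hB => Finset.mem_univ _, ?_⟩
    exact fun B hB => restrict_connected hG.2 hB
  · intro g hg
    funext B hB
    exact restrict_glue hB
  · intro G hG
    exact glue_restrict (Finset.mem_filter.1 hG).2
  · intro g hg
    rw [Finset.mem_filter] at hg
    rw [glue_weight]
    refine Finset.prod_congr rfl fun B _ => ?_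
    rw [if_pos (hg.2 B.1 B.2)]

end ClusterAux

/-- **Cluster (cumulant) expansion of the exclusion indicator**:
`∏_{1 ≤ i < j ≤ n} (1 − a_{ij}) = Σ_{σ partition of {1,…,n}} ∏_{B block of σ} φ_B(a)`. -/
theorem exclusion_cluster_expansion (n : ℕ) (hn : 1 ≤ n) (a : Sym2 (Fin n) → ℝ) :
    ∏ e ∈ (⊤ : SimpleGraph (Fin n)).edgeFinset, (1 - a e) =
      ∑ σ : Finpartition (Finset.univ : Finset (Fin n)),
        ∏ B ∈ σ.parts, clusterValue a B := by
  classical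
  set E := (⊤ : SimpleGraph (Fin n)).edgeFinset with hE
  have h1 : ∏ e ∈ E, (1 - a e) = ∑ t ∈ E.powerset, ∏ e ∈ t, (-(a e)) := by
    have : ∀ e ∈ E, (1 - a e) = (-(a e)) + 1 := fun e _ => by ring
    rw [Finset.prod_congr rfl this, Finset.prod_add]
    exact Finset.sum_congr rfl fun t _ => by simp
  have h2 : ∑ t ∈ E.powerset, ∏ e ∈ t, (-(a e)) =
      ∑ G : SimpleGraph (Fin n), ∏ e ∈ G.edgeFinset, (-(a e)) := by
    refine Finset.sum_nbij' (fun t => SimpleGraph.fromEdgeSet (↑t : Set (Sym2 (Fin n))))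
      (fun G => G.edgeFinset) ?_ ?_ ?_ ?_ ?_
    · intro t _
      exact Finset.mem_univ _
    · intro G _
      exact Finset.mem_powerset.2 (SimpleGraph.edgeFinset_mono le_top)
    · intro t ht
      beta_reduce
      have hnd : ∀ e ∈ (↑t : Set (Sym2 (Fin n))), ¬ e.IsDiag := by
        intro e he
        have : e ∈ (⊤ : SimpleGraph (Fin n)).edgeSet := by
          rw [← SimpleGraph.coe_edgeFinset]
          exact Finset.mem_coe.2 (Finset.mem_powerset.1 ht he)
        exact SimpleGraph.not_isDiag_of_mem_edgeSet _ this
      have hset : (SimpleGraph.fromEdgeSet (↑t : Set (Sym2 (Fin n)))).edgeSet = ↑t := by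
        rw [SimpleGraph.edgeSet_fromEdgeSet]
        ext e
        simp only [Set.mem_diff, Set.mem_setOf_eq, and_iff_left_iff_imp]
        exact fun he => hnd e he
      apply Finset.coe_injective
      rw [SimpleGraph.coe_edgeFinset, hset]
    · intro G _
      beta_reduce
      rw [SimpleGraph.coe_edgeFinset, SimpleGraph.fromEdgeSet_edgeSet]
    · intro t ht
      have hnd : ∀ e ∈ (↑t : Set (Sym2 (Fin n))), ¬ e.IsDiag := by
        intro e he
        have : e ∈ (⊤ : SimpleGraph (Fin n)).edgeSet := by
          rw [← SimpleGraph.coe_edgeFinset]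
          exact Finset.mem_coe.2 (Finset.mem_powerset.1 ht he)
        exact SimpleGraph.not_isDiag_of_mem_edgeSet _ this
      have hset : (SimpleGraph.fromEdgeSet (↑t : Set (Sym2 (Fin n)))).edgeSet = ↑t := by
        rw [SimpleGraph.edgeSet_fromEdgeSet]
        ext e
        simp only [Set.mem_diff, Set.mem_setOf_eq, and_iff_left_iff_imp]
        exact fun he => hnd e he
      beta_reduce
      symm
      refine Finset.prod_congr (Finset.coe_injective ?_) fun _ _ => rfl
      rw [SimpleGraph.coe_edgeFinset, hset]
  have h3 : ∑ G : SimpleGraph (Fin n), ∏ e ∈ G.edgeFinset, (-(a e)) =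
      ∑ σ : Finpartition (Finset.univ : Finset (Fin n)),
        ∑ G ∈ Finset.univ.filter (fun G => ClusterAux.compPartition G = σ),
          ∏ e ∈ G.edgeFinset, (-(a e)) := by
    symm
    exact Finset.sum_fiberwise_of_maps_to (fun G _ => Finset.mem_univ _) _
  rw [h1, h2, h3]
  exact Finset.sum_congr rfl fun σ _ => ClusterAux.sum_fiber_eq a σ
end

section
/- Let d ≥ 2 be an integer, β > 0, and let φ : ℝ≥0 × 𝕋^d × ℝ^d → ℝ be continuously differentiable in the time and space variables, measurable in all variables, and satisfy the growth bound |φ(t,x,v)| ≤ A·exp(β|v|²/4) for some constant A and all (t,x,v). Assume φ solves the linear Rayleigh–Boltzmann equation pointwise: ∂_t φ(t,x,v) + v·∇_x φ(t,x,v) = ∫_{S^{d−1}} ∫_{ℝ^d} [φ(t,x,v − ⟨v−v_c, ω⟩ω) − φ(t,x,v)] · M_β(v_c) · ⟨ω, v_c − v⟩_+ dv_c dω. Then for every integer n ≥ 1 and every subset ℓ ⊆ {1,…,n}, the function G_n(t, z_1,…,z_n) := (∏_{i=1}^n M_β(v_i)) · (∏_{i ∈ ℓ} φ(t, x_i, v_i))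 satisfies, at every point, the limit hierarchy: ∂_t G_n + Σ_{i=1}^n v_i·∇_{x_i} G_n = Σ_{i=1}^n ∫_{S^{d−1}} ∫_{ℝ^d} ⟨ω, v_{n+1} − v_i⟩_+ · [ M_β(v_i') M_β(v_{n+1}') (∏_{j ≤ n, j ≠ i} M_β(v_j)) (∏_{j ∈ ℓ, j ≠ i} φ(t,x_j,v_j)) · Φ_i' − M_β(v_{n+1}) G_n(t, z_1,…,z_n) ] dv_{n+1} dω, where (v_i', v_{n+1}') = (v_i − ⟨v_i − v_{n+1}, ω⟩ω, v_{n+1} + ⟨v_i − v_{n+1}, ω⟩ω) are the elastically scattered velocities and Φ_i' := φ(t, x_i, v_i') if i ∈ ℓ and Φ_i' := 1 otherwise. -/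
open MeasureTheory
open scoped RealInnerProductSpace

/-- Euclidean `d`-space. -/
noncomputable abbrev Esp (d : ℕ) := EuclideanSpace ℝ (Fin d)

/-- The Maxwellian `M_β(v) = (β/(2π))^{d/2} exp(−β|v|²/2)`. -/
noncomputable def maxwellian (d : ℕ) (β : ℝ) (v : Esp d) : ℝ :=
  (β / (2 * Real.pi)) ^ ((d : ℝ) / 2) * Real.exp (-(β / 2) * ‖v‖ ^ 2)

/-- The tensorized limit density `G_n(t, z_1,…,z_n) = ∏_i M_β(v_i) · ∏_{i ∈ ℓ} φ(t,x_i,v_i)`,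
for a `ℤ^d`-periodic function `φ` on `ℝ × ℝ^d × ℝ^d` (i.e. a function on `ℝ≥0 × 𝕋^d × ℝ^d`). -/
noncomputable def limitDensity (d : ℕ) (β : ℝ) (φ : ℝ → Esp d → Esp d → ℝ)
    (n : ℕ) (ℓ : Finset (Fin n)) (t : ℝ) (x v : Fin n → Esp d) : ℝ :=
  (∏ i, maxwellian d β (v i)) * ∏ i ∈ ℓ, φ t (x i) (v i)

lemma maxwellian_collision (d : ℕ) (β : ℝ) (v w ω : Esp d) (hω : ‖ω‖ = 1) :
    maxwellian d β (v - ⟪v - w, ω⟫ • ω) * maxwellian d β (w + ⟪v - w, ω⟫ • ω) =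
      maxwellian d β v * maxwellian d β w := by
  have key : ‖v - ⟪v - w, ω⟫ • ω‖ ^ 2 + ‖w + ⟪v - w, ω⟫ • ω‖ ^ 2 = ‖v‖ ^ 2 + ‖w‖ ^ 2 := by
    have h1 : ‖(⟪v - w, ω⟫ : ℝ) • ω‖ ^ 2 = ⟪v - w, ω⟫ ^ 2 := by
      rw [norm_smul, mul_pow, hω]; simp [sq_abs]
    rw [norm_sub_sq_real, norm_add_sq_real, real_inner_smul_right, real_inner_smul_right, h1,
      inner_sub_left]
    ring
  have hexp : Real.exp (-(β / 2) * ‖v - ⟪v - w, ω⟫ • ω‖ ^ 2) *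
      Real.exp (-(β / 2) * ‖w + ⟪v - w, ω⟫ • ω‖ ^ 2) =
      Real.exp (-(β / 2) * ‖v‖ ^ 2) * Real.exp (-(β / 2) * ‖w‖ ^ 2) := by
    rw [← Real.exp_add, ← Real.exp_add]
    congr 1
    linear_combination (-(β / 2)) * key
  simp only [maxwellian]
  linear_combination ((β / (2 * Real.pi)) ^ ((d : ℝ) / 2)) ^ 2 * hexp

/-- **The tensorized Rayleigh–Boltzmann solutions satisfy the limit hierarchy.**
If `φ` (periodic in `x`, `C¹` in `(t,x)`, measurable, with Gaussian-controlled growth)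
solves the linear Rayleigh–Boltzmann equation pointwise, then for every `n ≥ 1` and every
set `ℓ ⊆ {1,…,n}` of tags, `G_n := M_β^{⊗n} φ^{⊗ℓ}` satisfies the limit BBGKY hierarchy
in which only collisions with an added equilibrium particle appear. -/
theorem limit_hierarchy (d : ℕ) (hd : 2 ≤ d) (β : ℝ) (hβ : 0 < β)
    (φ : ℝ → Esp d → Esp d → ℝ) (A : ℝ)
    (hreg : ∀ v : Esp d, ContDiff ℝ 1 (fun p : ℝ × Esp d => φ p.1 p.2 v))
    (hmeas : Measurable fun p : ℝ × Esp d × Esp d => φ p.1 p.2.1 p.2.2)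
    (hper : ∀ (t : ℝ) (x v : Esp d) (m : Fin d → ℤ),
      φ t (x + (show Esp d from WithLp.toLp 2 fun i => (m i : ℝ))) v = φ t x v)
    (hgrowth : ∀ (t : ℝ) (x v : Esp d), |φ t x v| ≤ A * Real.exp (β * ‖v‖ ^ 2 / 4))
    (heq : ∀ t : ℝ, 0 ≤ t → ∀ x v : Esp d,
      deriv (fun s => φ s x v) t + fderiv ℝ (fun y => φ t y v) x v =
        ∫ ω : Metric.sphere (0 : Esp d) 1, ∫ vc : Esp d,
          (φ t x (v - ⟪v - vc, (ω : Esp d)⟫ • (ω : Esp d)) - φ t x v) *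
            maxwellian d β vc * max ⟪(ω : Esp d), vc - v⟫ 0
          ∂volume ∂((volume : Measure (Esp d)).toSphere)) :
    ∀ n : ℕ, 1 ≤ n → ∀ ℓ : Finset (Fin n), ∀ t : ℝ, 0 ≤ t → ∀ x v : Fin n → Esp d,
      deriv (fun s => limitDensity d β φ n ℓ s x v) t +
        ∑ i, fderiv ℝ (fun y => limitDensity d β φ n ℓ t (Function.update x i y) v)
          (x i) (v i) =
      ∑ i, ∫ ω : Metric.sphere (0 : Esp d) 1, ∫ w : Esp d,
        max ⟪(ω : Esp d), w - v i⟫ 0 *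
          (maxwellian d β (v i - ⟪v i - w, (ω : Esp d)⟫ • (ω : Esp d)) *
            maxwellian d β (w + ⟪v i - w, (ω : Esp d)⟫ • (ω : Esp d)) *
            (∏ j ∈ Finset.univ.erase i, maxwellian d β (v j)) *
            (∏ j ∈ ℓ.erase i, φ t (x j) (v j)) *
            (if i ∈ ℓ then φ t (x i) (v i - ⟪v i - w, (ω : Esp d)⟫ • (ω : Esp d)) else 1) -
          maxwellian d β w * limitDensity d β φ n ℓ t x v)
        ∂volume ∂((volume : Measure (Esp d)).toSphere) := by
  intro n hn ℓ t ht x v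
  -- abbreviations
  set C : ℝ := ∏ i, maxwellian d β (v i) with hC
  set Q : Fin n → ℝ := fun i => ∏ j ∈ ℓ.erase i, φ t (x j) (v j) with hQ
  set D : Fin n → ℝ := fun i => deriv (fun s => φ s (x i) (v i)) t with hD
  set F : Fin n → ℝ := fun i => fderiv ℝ (fun y => φ t y (v i)) (x i) (v i) with hF
  -- differentiability facts
  have hdt : ∀ (a b : Esp d), DifferentiableAt ℝ (fun s : ℝ => φ s a b) t := by
    intro a b
    have h1 : DifferentiableAt ℝ (fun p : ℝ × Esp d => φ p.1 p.2 b) (t, a) :=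
      ((hreg b).differentiable one_ne_zero).differentiableAt
    exact h1.comp t ((differentiableAt_id : DifferentiableAt ℝ id t).prodMk (differentiableAt_const a))
  have hdx : ∀ (a b : Esp d), DifferentiableAt ℝ (fun y : Esp d => φ t y b) a := by
    intro a b
    have h1 : DifferentiableAt ℝ (fun p : ℝ × Esp d => φ p.1 p.2 b) (t, a) :=
      ((hreg b).differentiable one_ne_zero).differentiableAt
    exact h1.comp a ((differentiableAt_const t).prodMk differentiableAt_id)
  -- time derivative
  have hderiv : deriv (fun s => limitDensity d β φ n ℓ s x v) t = C * ∑ i ∈ ℓ, Q i * D i := by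
    have hprod : HasDerivAt (fun s => ∏ i ∈ ℓ, φ s (x i) (v i))
        (∑ i ∈ ℓ, (∏ j ∈ ℓ.erase i, φ t (x j) (v j)) • D i) t :=
      HasDerivAt.fun_finsetProd fun i _ => (hdt (x i) (v i)).hasDerivAt
    have h2 : HasDerivAt (fun s => limitDensity d β φ n ℓ s x v)
        (C * ∑ i ∈ ℓ, (∏ j ∈ ℓ.erase i, φ t (x j) (v j)) • D i) t := hprod.const_mul C
    rw [h2.deriv, hQ]
    simp [smul_eq_mul]
  -- space derivatives
  have hfd : ∀ i, fderiv ℝ (fun y => limitDensity d β φ n ℓ t (Function.update x i y) v)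
      (x i) (v i) = if i ∈ ℓ then (C * Q i) * F i else 0 := by
    intro i
    by_cases hi : i ∈ ℓ
    · have hfun : (fun y => limitDensity d β φ n ℓ t (Function.update x i y) v) =
          fun y => (C * Q i) * φ t y (v i) := by
        funext y
        simp only [limitDensity]
        rw [← Finset.mul_prod_erase ℓ (fun j => φ t (Function.update x i y j) (v j)) hi]
        have h3 : ∏ j ∈ ℓ.erase i, φ t (Function.update x i y j) (v j) = Q i :=
          Finset.prod_congr rfl fun j hj => by
            rw [Function.update_of_ne (Finset.ne_of_mem_erase hj)]
        rw [h3, Function.update_self]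
        ring
      rw [hfun, if_pos hi, fderiv_const_mul (hdx (x i) (v i)) (C * Q i)]
      simp [hF, smul_eq_mul]
    · have hfun : (fun y => limitDensity d β φ n ℓ t (Function.update x i y) v) =
          fun _ => limitDensity d β φ n ℓ t x v := by
        funext y
        simp only [limitDensity]
        congr 1
        refine Finset.prod_congr rfl fun j hj => ?_
        have hji : j ≠ i := fun h => hi (h ▸ hj)
        rw [Function.update_of_ne hji]
      rw [hfun, if_neg hi, fderiv_fun_const]
      rfl
  -- right-hand side term by term
  have hRHS : ∀ i : Fin n,
      (∫ ω : Metric.sphere (0 : Esp d) 1, ∫ w : Esp d,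
        max ⟪(ω : Esp d), w - v i⟫ 0 *
          (maxwellian d β (v i - ⟪v i - w, (ω : Esp d)⟫ • (ω : Esp d)) *
            maxwellian d β (w + ⟪v i - w, (ω : Esp d)⟫ • (ω : Esp d)) *
            (∏ j ∈ Finset.univ.erase i, maxwellian d β (v j)) *
            (∏ j ∈ ℓ.erase i, φ t (x j) (v j)) *
            (if i ∈ ℓ then φ t (x i) (v i - ⟪v i - w, (ω : Esp d)⟫ • (ω : Esp d)) else 1) -
          maxwellian d β w * limitDensity d β φ n ℓ t x v)
        ∂volume ∂((volume : Measure (Esp d)).toSphere)) =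
      if i ∈ ℓ then (C * Q i) * (D i + F i) else 0 := by
    intro i
    have hCsplit : C = maxwellian d β (v i) * ∏ j ∈ Finset.univ.erase i, maxwellian d β (v j) :=
      (Finset.mul_prod_erase Finset.univ _ (Finset.mem_univ i)).symm
    by_cases hi : i ∈ ℓ
    · -- pointwise identity of the inner integrand
      have hpt : ∀ (ω : Metric.sphere (0 : Esp d) 1) (w : Esp d),
          max ⟪(ω : Esp d), w - v i⟫ 0 *
          (maxwellian d β (v i - ⟪v i - w, (ω : Esp d)⟫ • (ω : Esp d)) *
            maxwellian d β (w + ⟪v i - w, (ω : Esp d)⟫ • (ω : Esp d)) *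
            (∏ j ∈ Finset.univ.erase i, maxwellian d β (v j)) *
            (∏ j ∈ ℓ.erase i, φ t (x j) (v j)) *
            (if i ∈ ℓ then φ t (x i) (v i - ⟪v i - w, (ω : Esp d)⟫ • (ω : Esp d)) else 1) -
          maxwellian d β w * limitDensity d β φ n ℓ t x v) =
          (C * Q i) * ((φ t (x i) (v i - ⟪v i - w, (ω : Esp d)⟫ • (ω : Esp d)) - φ t (x i) (v i)) *
            maxwellian d β w * max ⟪(ω : Esp d), w - v i⟫ 0) := by
        intro ω w
        rw [if_pos hi, maxwellian_collision d β (v i) w ω (norm_eq_of_mem_sphere ω)]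
        simp only [limitDensity]
        rw [← Finset.mul_prod_erase ℓ (fun j => φ t (x j) (v j)) hi, ← hC, hCsplit]
        simp only [hQ]
        ring
      have h1 : ∀ ω : Metric.sphere (0 : Esp d) 1,
          (∫ w : Esp d,
            max ⟪(ω : Esp d), w - v i⟫ 0 *
            (maxwellian d β (v i - ⟪v i - w, (ω : Esp d)⟫ • (ω : Esp d)) *
              maxwellian d β (w + ⟪v i - w, (ω : Esp d)⟫ • (ω : Esp d)) *
              (∏ j ∈ Finset.univ.erase i, maxwellian d β (v j)) *
              (∏ j ∈ ℓ.erase i, φ t (x j) (v j)) *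
              (if i ∈ ℓ then φ t (x i) (v i - ⟪v i - w, (ω : Esp d)⟫ • (ω : Esp d)) else 1) -
            maxwellian d β w * limitDensity d β φ n ℓ t x v)) =
          (C * Q i) * ∫ w : Esp d,
            (φ t (x i) (v i - ⟪v i - w, (ω : Esp d)⟫ • (ω : Esp d)) - φ t (x i) (v i)) *
              maxwellian d β w * max ⟪(ω : Esp d), w - v i⟫ 0 := by
        intro ω
        rw [show (fun w : Esp d =>
            max ⟪(ω : Esp d), w - v i⟫ 0 *
            (maxwellian d β (v i - ⟪v i - w, (ω : Esp d)⟫ • (ω : Esp d)) *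
              maxwellian d β (w + ⟪v i - w, (ω : Esp d)⟫ • (ω : Esp d)) *
              (∏ j ∈ Finset.univ.erase i, maxwellian d β (v j)) *
              (∏ j ∈ ℓ.erase i, φ t (x j) (v j)) *
              (if i ∈ ℓ then φ t (x i) (v i - ⟪v i - w, (ω : Esp d)⟫ • (ω : Esp d)) else 1) -
            maxwellian d β w * limitDensity d β φ n ℓ t x v)) =
            fun w : Esp d => (C * Q i) *
              ((φ t (x i) (v i - ⟪v i - w, (ω : Esp d)⟫ • (ω : Esp d)) - φ t (x i) (v i)) *
                maxwellian d β w * max ⟪(ω : Esp d), w - v i⟫ 0) from funext (hpt ω)]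
        exact integral_const_mul _ _
      rw [if_pos hi]
      simp_rw [h1]
      rw [integral_const_mul, ← heq t ht (x i) (v i)]
    · -- untagged particle: gain and loss cancel
      have hpt : ∀ (ω : Metric.sphere (0 : Esp d) 1) (w : Esp d),
          max ⟪(ω : Esp d), w - v i⟫ 0 *
          (maxwellian d β (v i - ⟪v i - w, (ω : Esp d)⟫ • (ω : Esp d)) *
            maxwellian d β (w + ⟪v i - w, (ω : Esp d)⟫ • (ω : Esp d)) *
            (∏ j ∈ Finset.univ.erase i, maxwellian d β (v j)) *
            (∏ j ∈ ℓ.erase i, φ t (x j) (v j)) *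
            (if i ∈ ℓ then φ t (x i) (v i - ⟪v i - w, (ω : Esp d)⟫ • (ω : Esp d)) else 1) -
          maxwellian d β w * limitDensity d β φ n ℓ t x v) = 0 := by
        intro ω w
        rw [if_neg hi, maxwellian_collision d β (v i) w ω (norm_eq_of_mem_sphere ω),
          Finset.erase_eq_of_notMem hi]
        simp only [limitDensity]
        rw [← hC, hCsplit]
        ring
      rw [if_neg hi]
      have h1 : ∀ ω : Metric.sphere (0 : Esp d) 1,
          (∫ w : Esp d,
            max ⟪(ω : Esp d), w - v i⟫ 0 *
            (maxwellian d β (v i - ⟪v i - w, (ω : Esp d)⟫ • (ω : Esp d)) *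
              maxwellian d β (w + ⟪v i - w, (ω : Esp d)⟫ • (ω : Esp d)) *
              (∏ j ∈ Finset.univ.erase i, maxwellian d β (v j)) *
              (∏ j ∈ ℓ.erase i, φ t (x j) (v j)) *
              (if i ∈ ℓ then φ t (x i) (v i - ⟪v i - w, (ω : Esp d)⟫ • (ω : Esp d)) else 1) -
            maxwellian d β w * limitDensity d β φ n ℓ t x v)) = 0 := by
        intro ω
        rw [show (fun w : Esp d =>
            max ⟪(ω : Esp d), w - v i⟫ 0 *
            (maxwellian d β (v i - ⟪v i - w, (ω : Esp d)⟫ • (ω : Esp d)) *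
              maxwellian d β (w + ⟪v i - w, (ω : Esp d)⟫ • (ω : Esp d)) *
              (∏ j ∈ Finset.univ.erase i, maxwellian d β (v j)) *
              (∏ j ∈ ℓ.erase i, φ t (x j) (v j)) *
              (if i ∈ ℓ then φ t (x i) (v i - ⟪v i - w, (ω : Esp d)⟫ • (ω : Esp d)) else 1) -
            maxwellian d β w * limitDensity d β φ n ℓ t x v)) = fun _ : Esp d => (0 : ℝ)
          from funext (hpt ω)]
        exact integral_zero _ _
      simp_rw [h1]
      exact integral_zero _ _
  -- assemble
  rw [hderiv]
  rw [Finset.sum_congr rfl fun i _ => hfd i, Finset.sum_congr rfl fun i _ => hRHS i]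
  rw [Finset.sum_ite_mem, Finset.sum_ite_mem, Finset.mul_sum]
  simp only [Finset.univ_inter]
  rw [← Finset.sum_add_distrib]
  exact Finset.sum_congr rfl fun i _ => by ring
end
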